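/- Let $\{b_k\}_{k\ge1}$ be a sequence of nonnegative real numbers and $C>0$, $\sigma\ge2$ an integer, such that for all $k\ge2$, $b_k \le C \sum_{k_1+\cdots+k_\sigma=k,\ k_i\ge1} b_{k_1}\cdots b_{k_\sigma}$. Then $b_k \le b_1 C_0^{k-1}$ for all $k\ge1$, where $C_0 = \frac{\pi^2}{6}(C\sigma^2)^{1/(\sigma-1)} b_1$. -/
import Mathlib

open Finset Real

private lemma zeta_partial_bound (k : ℕ) :
    ∑ m ∈ Finset.Icc 1 k, (1 : ℝ) / (m : ℝ) ^ 2 ≤ π ^ 2 / 6 :=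
  sum_le_hasSum _ (fun m _ => by positivity) hasSum_zeta_two

private lemma coord_lt {σ m : ℕ} (hσ : 2 ≤ σ) (v : Fin σ → ℕ)
    (hsum : ∑ i, v i = m) (h1 : ∀ i, 1 ≤ v i) (i : Fin σ) : v i < m := by
  have h2 : v i + ∑ x ∈ univ.erase i, v x = m := by
    rw [Finset.add_sum_erase _ v (mem_univ i)]; exact hsum
  have hcard : 0 < (univ.erase i).card := by
    rw [Finset.card_erase_of_mem (mem_univ i)]
    simp only [card_univ, Fintype.card_fin]
    omega
  obtain ⟨j, hjmem⟩ := Finset.card_pos.1 hcard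
  have h3 : v j ≤ ∑ x ∈ univ.erase i, v x :=
    Finset.single_le_sum (fun x _ => Nat.zero_le _) hjmem
  have := h1 j
  have := h1 i
  omega

private lemma inner_bound (σ k : ℕ) (hk : 1 ≤ k) (i : Fin σ) :
    ∑ v ∈ (Finset.Nat.antidiagonalTuple σ k).filter (fun v => ∀ i, 1 ≤ v i),
      ∏ j ∈ Finset.univ.erase i, (1 : ℝ) / ((v j : ℝ)) ^ 2 ≤ (π ^ 2 / 6) ^ (σ - 1) := by
  classical
  set g : ℕ → ℝ := fun m => (1 : ℝ) / (m : ℝ) ^ 2 with hg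
  set E := (Finset.Nat.antidiagonalTuple σ k).filter (fun v => ∀ i, 1 ≤ v i) with hE
  set φ : (Fin σ → ℕ) → (Fin σ → ℕ) := fun v => Function.update v i 1 with hφ
  have hφj : ∀ (v : Fin σ → ℕ) (j : Fin σ), j ≠ i → φ v j = v j := by
    intro v j hj
    simp [hφ, Function.update_of_ne hj]
  have hmem : ∀ v ∈ E, (∑ j, v j = k) ∧ ∀ j, 1 ≤ v j := by
    intro v hv
    obtain ⟨h1, h2⟩ := mem_filter.1 hv
    exact ⟨Finset.Nat.mem_antidiagonalTuple.1 h1, h2⟩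
  have hinj : Set.InjOn φ E := by
    intro v hv w hw h
    obtain ⟨hv1, hv2⟩ := hmem v hv
    obtain ⟨hw1, hw2⟩ := hmem w hw
    have hne : ∀ j, j ≠ i → v j = w j := by
      intro j hj
      have := congrFun h j
      rwa [hφj v j hj, hφj w j hj] at this
    funext j
    rcases eq_or_ne j i with rfl | hj
    · have hv3 : v j + ∑ x ∈ univ.erase j, v x = k := by
        rw [Finset.add_sum_erase _ v (mem_univ j)]; exact hv1
      have hw3 : w j + ∑ x ∈ univ.erase j, w x = k := by
        rw [Finset.add_sum_erase _ w (mem_univ j)]; exact hw1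
      have : ∑ x ∈ univ.erase j, v x = ∑ x ∈ univ.erase j, w x :=
        Finset.sum_congr rfl fun x hx => hne x (Finset.mem_erase.1 hx).1
      omega
    · exact hne j hj
  have step1 : ∑ v ∈ E, ∏ j ∈ univ.erase i, g (v j)
      = ∑ w ∈ E.image φ, ∏ j ∈ univ.erase i, g (w j) := by
    rw [Finset.sum_image (fun x hx y hy h => hinj hx hy h)]
    exact Finset.sum_congr rfl fun v _ =>
      Finset.prod_congr rfl fun j hj => by rw [hφj v j (Finset.mem_erase.1 hj).1]
  set T := Fintype.piFinset (fun j : Fin σ => if j = i then ({1} : Finset ℕ) else Finset.Icc 1 k)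
    with hT
  have hsub : E.image φ ⊆ T := by
    intro w hw
    obtain ⟨v, hv, rfl⟩ := Finset.mem_image.1 hw
    obtain ⟨hv1, hv2⟩ := hmem v hv
    rw [hT, Fintype.mem_piFinset]
    intro j
    rcases eq_or_ne j i with rfl | hj
    · simp [hφ]
    · rw [if_neg hj, hφj v j hj, Finset.mem_Icc]
      refine ⟨hv2 j, ?_⟩
      calc v j ≤ ∑ x, v x := Finset.single_le_sum (fun x _ => Nat.zero_le _) (mem_univ j)
        _ = k := hv1
  have step2 : ∑ w ∈ E.image φ, ∏ j ∈ univ.erase i, g (w j)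
      ≤ ∑ w ∈ T, ∏ j ∈ univ.erase i, g (w j) :=
    Finset.sum_le_sum_of_subset_of_nonneg hsub
      (fun w _ _ => Finset.prod_nonneg fun j _ => by positivity)
  have hrw : ∀ w : Fin σ → ℕ, ∏ j ∈ univ.erase i, g (w j)
      = ∏ j, (if j = i then (1 : ℝ) else g (w j)) := by
    intro w
    rw [← Finset.mul_prod_erase univ (fun j => if j = i then (1 : ℝ) else g (w j)) (mem_univ i),
      if_pos rfl, one_mul]
    exact Finset.prod_congr rfl fun j hj => (if_neg (Finset.mem_erase.1 hj).1).symm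
  have step3 : ∑ w ∈ T, ∏ j ∈ univ.erase i, g (w j) ≤ (π ^ 2 / 6) ^ (σ - 1) := by
    have e1 : ∑ w ∈ T, ∏ j ∈ univ.erase i, g (w j)
        = ∑ w ∈ T, ∏ j, (if j = i then (1 : ℝ) else g (w j)) :=
      Finset.sum_congr rfl fun w _ => hrw w
    have e2 : ∑ w ∈ T, ∏ j, (if j = i then (1 : ℝ) else g (w j))
        = ∏ j, ∑ m ∈ (if j = i then ({1} : Finset ℕ) else Finset.Icc 1 k),
            (if j = i then (1 : ℝ) else g m) :=
      (Finset.prod_univ_sum (fun j : Fin σ => if j = i then ({1} : Finset ℕ) else Finset.Icc 1 k)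
        (fun j m => if j = i then (1 : ℝ) else g m)).symm
    rw [e1, e2, ← Finset.mul_prod_erase univ
      (fun j => ∑ m ∈ (if j = i then ({1} : Finset ℕ) else Finset.Icc 1 k),
        (if j = i then (1 : ℝ) else g m)) (mem_univ i)]
    have hfirst : (∑ m ∈ (if i = i then ({1} : Finset ℕ) else Finset.Icc 1 k),
        (if i = i then (1 : ℝ) else g m)) = 1 := by simp
    rw [hfirst, one_mul]
    have hcard : (univ.erase i).card = σ - 1 := by
      rw [Finset.card_erase_of_mem (mem_univ i), card_univ, Fintype.card_fin]
    calc ∏ j ∈ univ.erase i, ∑ m ∈ (if j = i then ({1} : Finset ℕ) else Finset.Icc 1 k),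
          (if j = i then (1 : ℝ) else g m)
        ≤ ∏ _j ∈ univ.erase i, (π ^ 2 / 6) := by
          refine Finset.prod_le_prod (fun j hj => ?_) (fun j hj => ?_)
          · rw [if_neg (Finset.mem_erase.1 hj).1]
            refine Finset.sum_nonneg fun m _ => ?_
            rw [if_neg (Finset.mem_erase.1 hj).1]
            positivity
          · rw [if_neg (Finset.mem_erase.1 hj).1]
            refine le_trans (le_of_eq (Finset.sum_congr rfl fun m _ => ?_))
              (zeta_partial_bound k)
            rw [if_neg (Finset.mem_erase.1 hj).1]
      _ = (π ^ 2 / 6) ^ (σ - 1) := by rw [Finset.prod_const, hcard]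
  calc ∑ v ∈ E, ∏ j ∈ univ.erase i, g (v j)
      = ∑ w ∈ E.image φ, ∏ j ∈ univ.erase i, g (w j) := step1
    _ ≤ ∑ w ∈ T, ∏ j ∈ univ.erase i, g (w j) := step2
    _ ≤ (π ^ 2 / 6) ^ (σ - 1) := step3

private lemma key_bound (σ k : ℕ) (hk : 1 ≤ k) :
    ∑ v ∈ (Finset.Nat.antidiagonalTuple σ k).filter (fun v => ∀ i, 1 ≤ v i),
      ∏ i, (1 : ℝ) / ((v i : ℝ)) ^ 2
      ≤ (σ : ℝ) ^ 2 * (π ^ 2 / 6) ^ (σ - 1) / (k : ℝ) ^ 2 := by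
  classical
  set E := (Finset.Nat.antidiagonalTuple σ k).filter (fun v => ∀ i, 1 ≤ v i) with hE
  have hk0 : (0 : ℝ) < (k : ℝ) ^ 2 := by positivity
  have step : ∀ v ∈ E, ∏ i, (1 : ℝ) / ((v i : ℝ)) ^ 2
      ≤ (σ : ℝ) / (k : ℝ) ^ 2 * ∑ i, ∏ j ∈ univ.erase i, (1 : ℝ) / ((v j : ℝ)) ^ 2 := by
    intro v hv
    obtain ⟨hv1, hv2⟩ := mem_filter.1 hv
    have hsum : ∑ i, v i = k := Finset.Nat.mem_antidiagonalTuple.1 hv1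
    have hvpos : ∀ i, (0 : ℝ) < (v i : ℝ) := fun i => by exact_mod_cast hv2 i
    have hcs : (k : ℝ) ^ 2 ≤ (σ : ℝ) * ∑ i, ((v i : ℝ)) ^ 2 := by
      have h := sq_sum_le_card_mul_sum_sq (s := (univ : Finset (Fin σ)))
        (f := fun i => ((v i : ℕ) : ℝ))
      have hcast : ∑ i, ((v i : ℕ) : ℝ) = (k : ℝ) := by
        rw [← Nat.cast_sum, hsum]
      rw [hcast, card_univ, Fintype.card_fin] at h
      exact_mod_cast h
    have hexp : ∀ i : Fin σ, ((v i : ℝ)) ^ 2 * ∏ j, (1 : ℝ) / ((v j : ℝ)) ^ 2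
        = ∏ j ∈ univ.erase i, (1 : ℝ) / ((v j : ℝ)) ^ 2 := by
      intro i
      rw [← Finset.mul_prod_erase univ (fun j => (1 : ℝ) / ((v j : ℝ)) ^ 2) (mem_univ i),
        ← mul_assoc]
      have : ((v i : ℝ)) ^ 2 * ((1 : ℝ) / ((v i : ℝ)) ^ 2) = 1 := by
        rw [mul_one_div]
        exact div_self (pow_pos (hvpos i) 2).ne' 
      rw [this, one_mul]
    have hprod_nonneg : (0 : ℝ) ≤ ∏ j, (1 : ℝ) / ((v j : ℝ)) ^ 2 :=
      Finset.prod_nonneg fun j _ => by positivity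
    have hmain : (∑ i, ((v i : ℝ)) ^ 2) * ∏ j, (1 : ℝ) / ((v j : ℝ)) ^ 2
        = ∑ i, ∏ j ∈ univ.erase i, (1 : ℝ) / ((v j : ℝ)) ^ 2 := by
      rw [Finset.sum_mul]
      exact Finset.sum_congr rfl fun i _ => hexp i
    rw [div_mul_eq_mul_div, le_div_iff₀ hk0]
    calc (∏ i, (1 : ℝ) / ((v i : ℝ)) ^ 2) * (k : ℝ) ^ 2
        ≤ (∏ i, (1 : ℝ) / ((v i : ℝ)) ^ 2) * ((σ : ℝ) * ∑ i, ((v i : ℝ)) ^ 2) := by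
          exact mul_le_mul_of_nonneg_left hcs hprod_nonneg
      _ = (σ : ℝ) * ((∑ i, ((v i : ℝ)) ^ 2) * ∏ j, (1 : ℝ) / ((v j : ℝ)) ^ 2) := by ring
      _ = (σ : ℝ) * ∑ i, ∏ j ∈ univ.erase i, (1 : ℝ) / ((v j : ℝ)) ^ 2 := by rw [hmain]
  calc ∑ v ∈ E, ∏ i, (1 : ℝ) / ((v i : ℝ)) ^ 2
      ≤ ∑ v ∈ E, ((σ : ℝ) / (k : ℝ) ^ 2 * ∑ i, ∏ j ∈ univ.erase i, (1 : ℝ) / ((v j : ℝ)) ^ 2) :=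
        Finset.sum_le_sum step
    _ = (σ : ℝ) / (k : ℝ) ^ 2 * ∑ i : Fin σ, ∑ v ∈ E, ∏ j ∈ univ.erase i,
        (1 : ℝ) / ((v j : ℝ)) ^ 2 := by
        rw [← Finset.mul_sum, Finset.sum_comm]
    _ ≤ (σ : ℝ) / (k : ℝ) ^ 2 * ∑ i : Fin σ, (π ^ 2 / 6) ^ (σ - 1) := by
        refine mul_le_mul_of_nonneg_left (Finset.sum_le_sum fun i _ => ?_) (by positivity)
        exact inner_bound σ k hk i
    _ = (σ : ℝ) ^ 2 * (π ^ 2 / 6) ^ (σ - 1) / (k : ℝ) ^ 2 := by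
        rw [Finset.sum_const, card_univ, Fintype.card_fin]
        push_cast
        ring

/-- If a nonnegative sequence `b` satisfies the multilinear recursion bound
`b k ≤ C * ∑_{k₁+⋯+k_σ = k, kᵢ ≥ 1} b k₁ ⋯ b k_σ` for all `k ≥ 2`, then
`b k ≤ b 1 * C₀ ^ (k-1)` with `C₀ = π²/6 * (C σ²)^(1/(σ-1)) * b 1`. -/
theorem stmt0 (b : ℕ → ℝ) (hb : ∀ k, 0 ≤ b k) (C : ℝ) (hC : 0 < C) (σ : ℕ) (hσ : 2 ≤ σ)
    (hrec : ∀ k, 2 ≤ k →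
      b k ≤ C * ∑ v ∈ (Finset.Nat.antidiagonalTuple σ k).filter (fun v => ∀ i, 1 ≤ v i),
        ∏ i, b (v i)) :
    ∀ k, 1 ≤ k →
      b k ≤ b 1 * (Real.pi ^ 2 / 6 * (C * (σ : ℝ) ^ 2) ^ ((1 : ℝ) / ((σ : ℝ) - 1)) * b 1) ^ (k - 1) := by
  -- the case `b 1 = 0`
  by_cases hb1 : b 1 = 0
  · have hz : ∀ m, 1 ≤ m → b m = 0 := by
      intro m
      induction m using Nat.strong_induction_on with
      | _ m ih =>
        intro hm
        rcases Nat.lt_or_ge m 2 with h | h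
        · interval_cases m
          exact hb1
        · refine le_antisymm ?_ (hb m)
          refine (hrec m h).trans ?_
          have hzero : ∑ v ∈ (Finset.Nat.antidiagonalTuple σ m).filter (fun v => ∀ i, 1 ≤ v i),
              ∏ i, b (v i) = 0 := by
            refine Finset.sum_eq_zero fun v hv => ?_
            obtain ⟨hv1, hv2⟩ := Finset.mem_filter.1 hv
            have hsum : ∑ i, v i = m := Finset.Nat.mem_antidiagonalTuple.1 hv1
            have i0 : Fin σ := ⟨0, by omega⟩
            refine Finset.prod_eq_zero (Finset.mem_univ i0) ?_
            exact ih (v i0) (coord_lt hσ v hsum hv2 i0) (hv2 i0)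
          rw [hzero, mul_zero]
    intro k hk
    rw [hz k hk, hb1, zero_mul]
  · have hb1' : 0 < b 1 := lt_of_le_of_ne (hb 1) (Ne.symm hb1)
    have hσR : (1 : ℝ) ≤ (σ : ℝ) - 1 := by
      have : (2 : ℝ) ≤ (σ : ℝ) := by exact_mod_cast hσ
      linarith
    have hx : (0 : ℝ) < C * (σ : ℝ) ^ 2 := by positivity
    set A : ℝ := (C * (σ : ℝ) ^ 2) ^ ((1 : ℝ) / ((σ : ℝ) - 1)) with hA
    have hApos : 0 < A := Real.rpow_pos_of_pos hx _
    set C₀ : ℝ := π ^ 2 / 6 * A * b 1 with hC₀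
    have hpi : (0 : ℝ) < π ^ 2 / 6 := by positivity
    have hC₀pos : 0 < C₀ := by
      rw [hC₀]
      positivity
    -- the key power identity
    have hAexp : A ^ (σ - 1) = C * (σ : ℝ) ^ 2 := by
      have hcast : ((σ - 1 : ℕ) : ℝ) = (σ : ℝ) - 1 := by
        have : 1 ≤ σ := by omega
        push_cast [this]
        ring
      rw [← Real.rpow_natCast A (σ - 1), hA, ← Real.rpow_mul hx.le, hcast]
      rw [one_div, inv_mul_cancel₀ (by linarith : ((σ : ℝ) - 1) ≠ 0), Real.rpow_one]
    have hCid : C * (σ : ℝ) ^ 2 * (π ^ 2 / 6) ^ (σ - 1) * (b 1) ^ (σ - 1) = C₀ ^ (σ - 1) := by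
      rw [hC₀, mul_pow, mul_pow, hAexp]
      ring
    -- the strengthened claim
    have hkey : ∀ m, 1 ≤ m → b m ≤ b 1 * C₀ ^ (m - 1) / (m : ℝ) ^ 2 := by
      intro m
      induction m using Nat.strong_induction_on with
      | _ m ih =>
        intro hm
        rcases Nat.lt_or_ge m 2 with h | h
        · interval_cases m
          simp
        · have hm1 : (1 : ℕ) ≤ m := by omega
          have hmR : (0 : ℝ) < (m : ℝ) ^ 2 := by
            have : (0:ℝ) < (m:ℝ) := by exact_mod_cast (by omega : 0 < m)
            positivity
          set E := (Finset.Nat.antidiagonalTuple σ m).filter (fun v => ∀ i, 1 ≤ v i) with hE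
          rcases Finset.eq_empty_or_nonempty E with hEe | hEne
          · have h0 := hrec m h
            rw [← hE, hEe, Finset.sum_empty, mul_zero] at h0
            exact h0.trans (by positivity)
          · obtain ⟨v₀, hv₀⟩ := hEne
            have hv₀' := Finset.mem_filter.1 hv₀
            have hmσ : σ ≤ m := by
              have hsum : ∑ i, v₀ i = m := Finset.Nat.mem_antidiagonalTuple.1 hv₀'.1
              calc σ = ∑ _i : Fin σ, 1 := by simp
                _ ≤ ∑ i, v₀ i := Finset.sum_le_sum fun i _ => hv₀'.2 i
                _ = m := hsum
            have hstep : ∀ v ∈ E, ∏ i, b (v i)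
                ≤ (b 1) ^ σ * C₀ ^ (m - σ) * ∏ i, (1 : ℝ) / ((v i : ℝ)) ^ 2 := by
              intro v hv
              obtain ⟨hv1, hv2⟩ := Finset.mem_filter.1 hv
              have hsum : ∑ i, v i = m := Finset.Nat.mem_antidiagonalTuple.1 hv1
              have hvlt : ∀ i, v i < m := coord_lt hσ v hsum hv2
              have hsub : ∑ i : Fin σ, (v i - 1) = m - σ := by
                have h1 : (∑ i : Fin σ, (v i - 1)) + σ = m := by
                  calc (∑ i : Fin σ, (v i - 1)) + σ
                      = (∑ i : Fin σ, (v i - 1)) + ∑ _i : Fin σ, 1 := by simp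
                    _ = ∑ i : Fin σ, ((v i - 1) + 1) := (Finset.sum_add_distrib).symm
                    _ = ∑ i, v i := Finset.sum_congr rfl fun i _ => Nat.sub_add_cancel (hv2 i)
                    _ = m := hsum
                omega
              calc ∏ i, b (v i)
                  ≤ ∏ i, (b 1 * C₀ ^ (v i - 1) / ((v i : ℝ)) ^ 2) :=
                    Finset.prod_le_prod (fun i _ => hb _)
                      (fun i _ => ih (v i) (hvlt i) (hv2 i))
                _ = ∏ i, (b 1 * C₀ ^ (v i - 1) * ((1 : ℝ) / ((v i : ℝ)) ^ 2)) :=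
                    Finset.prod_congr rfl fun i _ => by rw [mul_one_div]
                _ = (∏ i, (b 1 * C₀ ^ (v i - 1))) * ∏ i, (1 : ℝ) / ((v i : ℝ)) ^ 2 :=
                    Finset.prod_mul_distrib
                _ = (b 1) ^ σ * C₀ ^ (m - σ) * ∏ i, (1 : ℝ) / ((v i : ℝ)) ^ 2 := by
                    rw [Finset.prod_mul_distrib, Finset.prod_const, card_univ, Fintype.card_fin,
                      Finset.prod_pow_eq_pow_sum, hsub]
            have hsumb : ∑ v ∈ E, ∏ i, b (v i)
                ≤ (b 1) ^ σ * C₀ ^ (m - σ) * ((σ : ℝ) ^ 2 * (π ^ 2 / 6) ^ (σ - 1) / (m : ℝ) ^ 2) := by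
              calc ∑ v ∈ E, ∏ i, b (v i)
                  ≤ ∑ v ∈ E, ((b 1) ^ σ * C₀ ^ (m - σ) * ∏ i, (1 : ℝ) / ((v i : ℝ)) ^ 2) :=
                    Finset.sum_le_sum hstep
                _ = (b 1) ^ σ * C₀ ^ (m - σ) * ∑ v ∈ E, ∏ i, (1 : ℝ) / ((v i : ℝ)) ^ 2 :=
                    (Finset.mul_sum _ _ _).symm
                _ ≤ (b 1) ^ σ * C₀ ^ (m - σ) * ((σ : ℝ) ^ 2 * (π ^ 2 / 6) ^ (σ - 1) / (m : ℝ) ^ 2) := by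
                    refine mul_le_mul_of_nonneg_left ?_ (by positivity)
                    exact key_bound σ m hm1
            have hfin : C * ((b 1) ^ σ * C₀ ^ (m - σ) * ((σ : ℝ) ^ 2 * (π ^ 2 / 6) ^ (σ - 1) / (m : ℝ) ^ 2))
                = b 1 * C₀ ^ (m - 1) / (m : ℝ) ^ 2 := by
              have hbσ : (b 1) ^ σ = (b 1) ^ (σ - 1) * b 1 := by
                rw [← pow_succ]
                congr 1
                omega
              have hC₀m : C₀ ^ (σ - 1) * C₀ ^ (m - σ) = C₀ ^ (m - 1) := by
                rw [← pow_add]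
                congr 1
                omega
              rw [hbσ, ← hC₀m, ← hCid]
              ring
            calc b m ≤ C * ∑ v ∈ E, ∏ i, b (v i) := hrec m h
              _ ≤ C * ((b 1) ^ σ * C₀ ^ (m - σ) * ((σ : ℝ) ^ 2 * (π ^ 2 / 6) ^ (σ - 1) / (m : ℝ) ^ 2)) :=
                  mul_le_mul_of_nonneg_left hsumb hC.le
              _ = b 1 * C₀ ^ (m - 1) / (m : ℝ) ^ 2 := hfin
    intro k hk
    have h1 : b k ≤ b 1 * C₀ ^ (k - 1) / (k : ℝ) ^ 2 := hkey k hk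
    have h2 : b 1 * C₀ ^ (k - 1) / (k : ℝ) ^ 2 ≤ b 1 * C₀ ^ (k - 1) := by
      have hk1 : (1 : ℝ) ≤ (k : ℝ) ^ 2 := by
        have : (1 : ℝ) ≤ (k : ℝ) := by exact_mod_cast hk
        nlinarith
      exact div_le_self (by positivity) hk1
    exact h1.trans h2
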